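/- Closed form for the weighted repeated-argument sum: for every tuple (x_0, …, x_q) of real numbers and every real τ, one has Σ_{j=0}^{q} x_j · e^{-τ[x_0, …, x_q, x_j]} = (−x_0 τ − q) · e^{-τ[x_0, …, x_q]} − τ · e^{-τ[x_1, …, x_q]} when q ≥ 1, and Σ_{j=0}^{0} x_j · e^{-τ[x_0, x_0]} = −τ x_0 e^{-τ x_0} when q = 0. -/

import Mathlib

open scoped BigOperators

/-- Complete homogeneous symmetric polynomial of degree `m` in the entries of the list `l`:
`h_m(x_0, …, x_q) = Σ_{k_0+⋯+k_q = m} x_0^{k_0}⋯x_q^{k_q}` (with `h_0 = 1`). -/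
noncomputable def hsymm (l : List ℝ) (m : ℕ) : ℝ :=
  ∑ k ∈ Finset.Nat.antidiagonalTuple l.length m, ∏ i : Fin l.length, l.get i ^ k i

/-- Divided difference of the exponential `e^{t[x_0, …, x_q]}` over the tuple given by the
list `l` (of length `q+1`), defined by its (absolutely convergent) series
`Σ_{m=0}^∞ (t^{q+m}/(q+m)!) · h_m(x_0, …, x_q)`; by convention it is `0` on the empty tuple. -/
noncomputable def dde (t : ℝ) (l : List ℝ) : ℝ :=
  if l.length = 0 then 0
  else ∑' m : ℕ, t ^ (l.length - 1 + m) / (Nat.factorial (l.length - 1 + m)) * hsymm l m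

/-- The sub-tuple `[x_a, …, x_b]` of the sequence `x`, as a list (empty if `b < a`). -/
def seg (x : ℕ → ℝ) (a b : ℕ) : List ℝ :=
  (List.range (b + 1 - a)).map (fun i => x (a + i))



noncomputable def gs (y : ℝ) : PowerSeries ℝ := PowerSeries.mk fun a => y ^ a

noncomputable def HP (l : List ℝ) : PowerSeries ℝ := (l.map gs).prod

lemma hsymm_eq_coeff (l : List ℝ) (m : ℕ) :
    hsymm l m = PowerSeries.coeff m (HP l) := by
  classical
  have h1 : HP l = ∏ i : Fin l.length, gs (l.get i) := by
    rw [HP]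
    conv_lhs => rw [← List.ofFn_get l]
    rw [List.map_ofFn, List.prod_ofFn]
    rfl
  rw [h1, PowerSeries.coeff_prod]
  rw [hsymm]
  refine Finset.sum_nbij' (fun k => Finsupp.equivFunOnFinite.symm k) (fun f => ⇑f) ?_ ?_ ?_ ?_ ?_
  · intro k hk
    rw [Finset.Nat.mem_antidiagonalTuple] at hk
    rw [Finset.mem_finsuppAntidiag]
    constructor
    · rw [← hk]; exact Finset.sum_congr rfl (fun i _ => rfl)
    · exact Finset.subset_univ _
  · intro f hf
    rw [Finset.mem_finsuppAntidiag] at hf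
    rw [Finset.Nat.mem_antidiagonalTuple]
    exact hf.1
  · intro k _; rfl
  · intro f _; simp
  · intro k _
    refine Finset.prod_congr rfl (fun i _ => ?_)
    rw [gs, PowerSeries.coeff_mk]
    simp

lemma HP_cons (y : ℝ) (l : List ℝ) : HP (y :: l) = gs y * HP l := by
  simp [HP]

lemma HP_append_single (l : List ℝ) (y : ℝ) : HP (l ++ [y]) = gs y * HP l := by
  simp [HP, mul_comm]

lemma coeff_gs (y : ℝ) (n : ℕ) : PowerSeries.coeff n (gs y) = y ^ n := by
  simp [gs]

lemma hsymm_cons (y : ℝ) (l : List ℝ) (m : ℕ) :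
    hsymm (y :: l) m = ∑ p ∈ Finset.HasAntidiagonal.antidiagonal m, y ^ p.1 * hsymm l p.2 := by
  rw [hsymm_eq_coeff, HP_cons, PowerSeries.coeff_mul]
  exact Finset.sum_congr rfl fun p _ => by rw [coeff_gs, hsymm_eq_coeff]

lemma hsymm_append_single (l : List ℝ) (y : ℝ) (m : ℕ) :
    hsymm (l ++ [y]) m = ∑ p ∈ Finset.HasAntidiagonal.antidiagonal m, y ^ p.1 * hsymm l p.2 := by
  rw [hsymm_eq_coeff, HP_append_single, PowerSeries.coeff_mul]
  exact Finset.sum_congr rfl fun p _ => by rw [coeff_gs, hsymm_eq_coeff]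

lemma hsymm_zero (l : List ℝ) : hsymm l 0 = 1 := by
  rw [hsymm, Finset.Nat.antidiagonalTuple_zero_right, Finset.sum_singleton]
  simp

lemma hsymm_nil (m : ℕ) : hsymm [] (m + 1) = 0 := by
  rw [hsymm]
  simp

lemma coeff_derivativeFun' (f : PowerSeries ℝ) (n : ℕ) :
    PowerSeries.coeff n (PowerSeries.derivativeFun f) = PowerSeries.coeff (n + 1) f * (n + 1) :=
  PowerSeries.coeff_derivative f n

lemma derivativeFun_gs (y : ℝ) :
    PowerSeries.derivativeFun (gs y) = PowerSeries.C y * (gs y * gs y) := by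
  ext n
  rw [coeff_derivativeFun', coeff_gs, ← PowerSeries.smul_eq_C_mul,
    LinearMap.map_smul, PowerSeries.coeff_mul]
  have : ∀ p ∈ Finset.HasAntidiagonal.antidiagonal n,
      PowerSeries.coeff p.1 (gs y) * PowerSeries.coeff p.2 (gs y) = y ^ n := by
    intro p hp
    rw [Finset.HasAntidiagonal.mem_antidiagonal] at hp
    rw [coeff_gs, coeff_gs, ← pow_add, hp]
  rw [Finset.sum_congr rfl this, Finset.sum_const, Finset.Nat.card_antidiagonal]
  rw [smul_eq_mul]
  push_cast
  ring

lemma derivativeFun_HP (l : List ℝ) :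
    PowerSeries.derivativeFun (HP l)
      = (l.map (fun y => PowerSeries.C y * gs y)).sum * HP l := by
  induction l with
  | nil =>
      simp only [HP, List.map_nil, List.prod_nil, List.sum_nil, zero_mul]
      exact PowerSeries.derivativeFun_one
  | cons y l ih =>
      rw [HP_cons, PowerSeries.derivativeFun_mul, ih, derivativeFun_gs]
      simp only [List.map_cons, List.sum_cons, smul_eq_mul]
      ring

lemma key_identity (l : List ℝ) (m : ℕ) :
    (l.map (fun y => y * hsymm (l ++ [y]) m)).sum = (m + 1 : ℝ) * hsymm l (m + 1) := by
  have h := congrArg (PowerSeries.coeff m) (derivativeFun_HP l)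
  rw [coeff_derivativeFun', ← hsymm_eq_coeff] at h
  rw [← List.sum_map_mul_right, map_list_sum, List.map_map] at h
  rw [mul_comm, h]
  congr 1
  refine List.map_congr_left fun y _ => ?_
  show y * hsymm (l ++ [y]) m
    = (PowerSeries.coeff m) (PowerSeries.C y * gs y * HP l)
  rw [hsymm_eq_coeff, HP_append_single, mul_assoc, ← PowerSeries.smul_eq_C_mul,
    LinearMap.map_smul, smul_eq_mul]

lemma hsymm_bound (l : List ℝ) (M : ℝ) (h0 : 0 ≤ M) (hM : ∀ y ∈ l, |y| ≤ M) (m : ℕ) :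
    |hsymm l m| ≤ ((2:ℝ) ^ l.length * M) ^ m := by
  classical
  have card_le : (Finset.Nat.antidiagonalTuple l.length m).card ≤ (m + 1) ^ l.length := by
    have hsub : Finset.Nat.antidiagonalTuple l.length m
        ⊆ Fintype.piFinset (fun _ : Fin l.length => Finset.range (m + 1)) := by
      intro k hk
      rw [Finset.Nat.mem_antidiagonalTuple] at hk
      rw [Fintype.mem_piFinset]
      intro i
      rw [Finset.mem_range, Nat.lt_succ_iff, ← hk]
      exact Finset.single_le_sum (fun _ _ => Nat.zero_le _) (Finset.mem_univ i)
    calc (Finset.Nat.antidiagonalTuple l.length m).card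
        ≤ (Fintype.piFinset (fun _ : Fin l.length => Finset.range (m + 1))).card :=
          Finset.card_le_card hsub
      _ = (m + 1) ^ l.length := by simp
  have habs : |hsymm l m| ≤ ((m + 1 : ℕ) : ℝ) ^ l.length * M ^ m := by
    rw [hsymm]
    calc |∑ k ∈ Finset.Nat.antidiagonalTuple l.length m, ∏ i : Fin l.length, l.get i ^ k i|
        ≤ ∑ k ∈ Finset.Nat.antidiagonalTuple l.length m, |∏ i : Fin l.length, l.get i ^ k i| :=
          Finset.abs_sum_le_sum_abs _ _
      _ ≤ ∑ k ∈ Finset.Nat.antidiagonalTuple l.length m, M ^ m := by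
          refine Finset.sum_le_sum fun k hk => ?_
          rw [Finset.Nat.mem_antidiagonalTuple] at hk
          rw [Finset.abs_prod, ← hk, ← Finset.prod_pow_eq_pow_sum]
          refine Finset.prod_le_prod (fun i _ => abs_nonneg _) fun i _ => ?_
          rw [abs_pow]
          exact pow_le_pow_left₀ (abs_nonneg _) (hM _ (l.get_mem i)) _
      _ = (Finset.Nat.antidiagonalTuple l.length m).card * M ^ m := by
          rw [Finset.sum_const, nsmul_eq_mul]
      _ ≤ ((m + 1 : ℕ) : ℝ) ^ l.length * M ^ m := by
          refine mul_le_mul_of_nonneg_right ?_ (pow_nonneg h0 _)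
          exact_mod_cast Nat.cast_le.mpr (by exact_mod_cast card_le)
  refine habs.trans ?_
  rw [mul_pow]
  refine mul_le_mul_of_nonneg_right ?_ (pow_nonneg h0 _)
  have h2 : ((m + 1 : ℕ) : ℝ) ≤ (2 : ℝ) ^ m := by
    exact_mod_cast Nat.succ_le_of_lt (Nat.lt_two_pow_self (n := m))
  calc ((m + 1 : ℕ) : ℝ) ^ l.length ≤ ((2:ℝ) ^ m) ^ l.length :=
        pow_le_pow_left₀ (by positivity) h2 _
    _ = ((2:ℝ) ^ l.length) ^ m := by rw [← pow_mul, ← pow_mul, Nat.mul_comm]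

lemma hsymm_cons_succ (y : ℝ) (l : List ℝ) (n : ℕ) :
    hsymm (y :: l) (n + 1) = y * hsymm (y :: l) n + hsymm l (n + 1) := by
  rw [hsymm_cons, hsymm_cons, Finset.Nat.sum_antidiagonal_succ, Finset.mul_sum]
  rw [pow_zero, one_mul, add_comm]
  congr 1
  refine Finset.sum_congr rfl fun p _ => ?_
  rw [pow_succ]
  ring

lemma summable_of_bound (f : ℕ → ℝ) (C s : ℝ)
    (h : ∀ n, |f n| ≤ C * s ^ n / n.factorial) : Summable f := by
  have hg : Summable (fun n : ℕ => C * s ^ n / n.factorial) := by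
    have := (Real.summable_pow_div_factorial s).mul_left C
    simpa [mul_div_assoc] using this
  exact Summable.of_abs (Summable.of_nonneg_of_le (fun n => abs_nonneg _) h hg)

lemma summable_aux (t s : ℝ) (hs : 0 ≤ s) (a b : ℕ) (g : ℕ → ℝ)
    (hg : ∀ n, |g n| ≤ s ^ n) :
    Summable (fun n => t ^ (a + n) / ((b + n).factorial : ℝ) * g n) := by
  refine summable_of_bound _ (|t| ^ a) (|t| * s) fun n => ?_
  rw [abs_mul, abs_div, abs_pow]
  have h1 : |((b + n).factorial : ℝ)| = ((b + n).factorial : ℝ) := abs_of_nonneg (by positivity)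
  rw [h1, pow_add, mul_pow]
  have hfle : ((n.factorial : ℝ)) ≤ ((b + n).factorial : ℝ) := by
    exact_mod_cast Nat.factorial_le (Nat.le_add_left n b)
  have hfpos : (0:ℝ) < n.factorial := by exact_mod_cast n.factorial_pos
  calc |t| ^ a * |t| ^ n / ((b + n).factorial : ℝ) * |g n|
      ≤ |t| ^ a * |t| ^ n / (n.factorial : ℝ) * s ^ n := by
        refine mul_le_mul ?_ (hg n) (abs_nonneg _) (by positivity)
        refine div_le_div_of_nonneg_left (by positivity) hfpos hfle
    _ = |t| ^ a * (|t| ^ n * s ^ n) / (n.factorial : ℝ) := by ring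

lemma summable_aux' (t s : ℝ) (hs : 0 ≤ s) (a b : ℕ) (g : ℕ → ℝ)
    (hg : ∀ n, |g n| ≤ s ^ n) :
    Summable (fun (n : ℕ) => (n : ℝ) * (t ^ (a + n) / ((b + n).factorial : ℝ) * g n)) := by
  refine summable_of_bound _ (|t| ^ a) (2 * (|t| * s)) fun n => ?_
  rw [abs_mul, abs_mul, abs_div, abs_pow]
  have h1 : |((b + n).factorial : ℝ)| = ((b + n).factorial : ℝ) := abs_of_nonneg (by positivity)
  rw [h1, pow_add, mul_pow, mul_pow]
  have hfle : ((n.factorial : ℝ)) ≤ ((b + n).factorial : ℝ) := by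
    exact_mod_cast Nat.factorial_le (Nat.le_add_left n b)
  have hfpos : (0:ℝ) < n.factorial := by exact_mod_cast n.factorial_pos
  have hfpos' : (0:ℝ) < (b + n).factorial := by exact_mod_cast (b+n).factorial_pos
  have hn2 : |(n:ℝ)| ≤ 2 ^ n := by
    rw [abs_of_nonneg (by positivity)]
    calc (n:ℝ) ≤ ((2^n : ℕ) : ℝ) := by exact_mod_cast (Nat.lt_two_pow_self (n := n)).le
      _ = 2 ^ n := by push_cast; ring
  calc |(n:ℝ)| * (|t| ^ a * |t| ^ n / ((b + n).factorial : ℝ) * |g n|)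
      ≤ 2 ^ n * (|t| ^ a * |t| ^ n / ((n).factorial : ℝ) * s ^ n) := by
        refine mul_le_mul hn2 ?_ (by positivity) (by positivity)
        refine mul_le_mul ?_ (hg n) (abs_nonneg _) (by positivity)
        refine div_le_div_of_nonneg_left (by positivity) hfpos hfle
    _ = |t| ^ a * (2 ^ n * (|t| ^ n * s ^ n)) / (n.factorial : ℝ) := by ring

lemma seg_zero (x : ℕ → ℝ) (q : ℕ) : seg x 0 q = (List.range (q + 1)).map x := by
  simp [seg]

lemma seg_length (x : ℕ → ℝ) (a b : ℕ) : (seg x a b).length = b + 1 - a := by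
  simp [seg]

lemma seg_cons (x : ℕ → ℝ) (q : ℕ) : seg x 0 q = x 0 :: seg x 1 q := by
  rw [seg_zero, seg, List.range_succ_eq_map]
  simp [List.map_map, Function.comp, Nat.add_comm]

lemma list_range_map_sum (n : ℕ) (f : ℕ → ℝ) :
    ((List.range n).map f).sum = ∑ j ∈ Finset.range n, f j := by
  induction n with
  | zero => simp
  | succ n ih => rw [List.range_succ, List.map_append, List.sum_append,
      Finset.sum_range_succ, ih]; simp

lemma mem_seg_zero (x : ℕ → ℝ) (q j : ℕ) (hj : j < q + 1) : x j ∈ seg x 0 q := by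
  rw [seg_zero]
  exact List.mem_map.mpr ⟨j, List.mem_range.mpr hj, rfl⟩

lemma main_aux (p : ℕ) (x : ℕ → ℝ) (t : ℝ) :
    ∑ j ∈ Finset.range (p + 2), x j * dde t (seg x 0 (p + 1) ++ [x j])
      = (x 0 * t - ((p : ℝ) + 1)) * dde t (seg x 0 (p + 1))
        + t * dde t (seg x 1 (p + 1)) := by
  set l := seg x 0 (p + 1) with hldef
  set l' := seg x 1 (p + 1) with hl'def
  have hl : l.length = p + 2 := by rw [hldef, seg_length]; omega
  have hl' : l'.length = p + 1 := by rw [hl'def, seg_length]; omega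
  have hcons : l = x 0 :: l' := seg_cons x (p + 1)
  set M : ℝ := (l.map abs).sum with hMdef
  have habs_nonneg : ∀ y ∈ l.map abs, 0 ≤ y := by
    intro y hy
    obtain ⟨z, _, rfl⟩ := List.mem_map.mp hy
    exact abs_nonneg z
  have hM0 : 0 ≤ M := List.sum_nonneg habs_nonneg
  have hMy : ∀ y ∈ l, |y| ≤ M :=
    fun y hy => List.single_le_sum habs_nonneg _ (List.mem_map.mpr ⟨y, hy, rfl⟩)
  set s : ℝ := 2 ^ (p + 4) * M with hsdef
  have hs0 : 0 ≤ s := by positivity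
  -- bounds
  have hbound : ∀ (L : List ℝ), L.length ≤ p + 4 → (∀ y ∈ L, |y| ≤ M) →
      ∀ m, |hsymm L m| ≤ s ^ m := by
    intro L hlen hLy m
    refine (hsymm_bound L M hM0 hLy m).trans ?_
    refine pow_le_pow_left₀ (by positivity) ?_ m
    refine mul_le_mul_of_nonneg_right ?_ hM0
    exact pow_le_pow_right₀ (by norm_num) hlen
  have hbl : ∀ m, |hsymm l m| ≤ s ^ m :=
    hbound l (by omega) hMy
  have hbl' : ∀ m, |hsymm l' m| ≤ s ^ m := by
    refine hbound l' (by omega) fun y hy => hMy y ?_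
    rw [hcons]; exact List.mem_cons_of_mem _ hy
  have hbaj : ∀ j ∈ Finset.range (p + 2), ∀ m, |hsymm (l ++ [x j]) m| ≤ s ^ m := by
    intro j hj
    refine hbound (l ++ [x j]) (by simp [hl]) fun y hy => ?_
    rcases List.mem_append.mp hy with h | h
    · exact hMy y h
    · rw [List.mem_singleton.mp h]
      exact hMy _ (mem_seg_zero x (p + 1) j (Finset.mem_range.mp hj))
  -- series
  set A : ℕ → ℝ := fun n => t ^ (p + 1 + n) / ((p + 1 + n).factorial : ℝ) * hsymm l n with hA
  set B : ℕ → ℝ := fun n => t ^ (p + n) / ((p + n).factorial : ℝ) * hsymm l' n with hB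
  set F : ℕ → ℝ := fun n => (n : ℝ) * A n with hF
  set D : ℕ → ℝ :=
    fun n => x 0 * (t ^ (p + 2 + n) / ((p + 1 + n).factorial : ℝ) * hsymm l n) with hD
  set G : ℕ → ℝ := fun n => (x 0 * t - ((p : ℝ) + 1)) * A n + t * B n with hG
  have sA : Summable A := summable_aux t s hs0 (p + 1) (p + 1) _ hbl
  have sB : Summable B := summable_aux t s hs0 p p _ hbl'
  have sF : Summable F := summable_aux' t s hs0 (p + 1) (p + 1) _ hbl
  have sD : Summable D := (summable_aux t s hs0 (p + 2) (p + 1) _ hbl).mul_left (x 0)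
  have sG : Summable G := ((sA.mul_left _).add (sB.mul_left _))
  -- dde values
  have hddel : dde t l = ∑' n, A n := by
    rw [dde, if_neg (by omega), hl]
    norm_num [hA]
  have hddel' : dde t l' = ∑' n, B n := by
    rw [dde, if_neg (by omega), hl']
    norm_num [hB]
  have hddelj : ∀ j ∈ Finset.range (p + 2), dde t (l ++ [x j])
      = ∑' m, t ^ (p + 2 + m) / ((p + 2 + m).factorial : ℝ) * hsymm (l ++ [x j]) m := by
    intro j _
    have hlen : (l ++ [x j]).length = p + 3 := by simp [hl]
    rw [dde, if_neg (by omega), hlen]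
    norm_num
  have sCj : ∀ j ∈ Finset.range (p + 2), Summable
      (fun m => x j * (t ^ (p + 2 + m) / ((p + 2 + m).factorial : ℝ) * hsymm (l ++ [x j]) m)) :=
    fun j hj => (summable_aux t s hs0 (p + 2) (p + 2) _ (hbaj j hj)).mul_left (x j)
  -- termwise key identity
  have hkey : ∀ m : ℕ, ∑ j ∈ Finset.range (p + 2),
      x j * (t ^ (p + 2 + m) / ((p + 2 + m).factorial : ℝ) * hsymm (l ++ [x j]) m)
        = F (m + 1) := by
    intro m
    have hk0 : ∑ j ∈ Finset.range (p + 2), x j * hsymm (l ++ [x j]) m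
        = ((m : ℝ) + 1) * hsymm l (m + 1) := by
      have hlmap : l = List.map x (List.range (p + 2)) := by
        rw [hldef, seg_zero]
      have hmaps : ((List.range (p + 2)).map ((fun y => y * hsymm (l ++ [y]) m) ∘ x)).sum
          = ((m : ℝ) + 1) * hsymm l (m + 1) := by
        rw [← List.map_map, ← hlmap]
        exact key_identity l m
      rw [list_range_map_sum] at hmaps
      rw [← hmaps]
      exact Finset.sum_congr rfl fun j _ => rfl
    calc ∑ j ∈ Finset.range (p + 2),
          x j * (t ^ (p + 2 + m) / ((p + 2 + m).factorial : ℝ) * hsymm (l ++ [x j]) m)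
        = t ^ (p + 2 + m) / ((p + 2 + m).factorial : ℝ)
            * ∑ j ∈ Finset.range (p + 2), x j * hsymm (l ++ [x j]) m := by
          rw [Finset.mul_sum]
          exact Finset.sum_congr rfl fun j _ => by ring
      _ = F (m + 1) := by
          rw [hk0, hF, hA]
          have e1 : p + 1 + (m + 1) = p + 2 + m := by omega
          simp only [e1]
          push_cast
          ring
  -- telescoping part
  set Epre : ℕ → ℝ := fun n => if n = 0 then 0 else D (n - 1) with hEpre
  have hEpreS : (fun n => Epre (n + 1)) = D := by
    funext n; simp [hEpre]
  have sEpre : Summable Epre := (summable_nat_add_iff 1).mp (hEpreS ▸ sD)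
  have hEpre0 : ∑' n, Epre n = ∑' n, D n := by
    rw [Summable.tsum_eq_zero_add sEpre, hEpreS]
    simp [hEpre]
  have hFG : ∀ n, F n = G n + (Epre n - D n) := by
    intro n
    have hfact : ∀ k : ℕ, ((k + 1).factorial : ℝ) = (k + 1) * (k.factorial : ℝ) := by
      intro k; rw [Nat.factorial_succ]; push_cast; ring
    match n with
    | 0 =>
      have h0 : hsymm l 0 = 1 := hsymm_zero l
      have h0' : hsymm l' 0 = 1 := hsymm_zero l'
      simp only [hF, hG, hA, hB, hD, hEpre, ↓reduceIte]
      rw [h0, h0']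
      have hf1 : ((p + 1 + 0).factorial : ℝ) = (p + 1) * (p.factorial : ℝ) := by
        rw [show p + 1 + 0 = p + 1 from rfl, hfact p]
      have hp0 : (0:ℝ) < (p.factorial : ℝ) := by exact_mod_cast p.factorial_pos
      rw [show p + 0 = p from rfl]
      rw [hf1]
      field_simp
      ring
    | Nat.succ n =>
      have hrel : hsymm l' (n + 1) = hsymm l (n + 1) - x 0 * hsymm l n := by
        have := hsymm_cons_succ (x 0) l' n
        rw [← hcons] at this
        rw [this]; ring
      simp only [hF, hG, hA, hB, hD, hEpre]
      rw [if_neg (Nat.succ_ne_zero n), Nat.succ_sub_one, hrel]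
      have e1 : p + 1 + (n + 1) = p + n + 2 := by omega
      have e2 : p + (n + 1) = p + n + 1 := by omega
      have e3 : p + 2 + (n + 1) = p + n + 3 := by omega
      have e4 : p + 2 + n = p + n + 2 := by omega
      have e5 : p + 1 + n = p + n + 1 := by omega
      simp only [e1, e2, e3, e4, e5]
      have hf2 : ((p + n + 2).factorial : ℝ) = (p + n + 2) * ((p + n + 1).factorial : ℝ) := by
        rw [show p + n + 2 = (p + n + 1) + 1 from rfl, hfact]
        push_cast; ring
      have hp1 : (0:ℝ) < ((p + n + 1).factorial : ℝ) := by
        exact_mod_cast (p + n + 1).factorial_pos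
      rw [hf2]
      have hne : ((p + n + 2 : ℝ)) ≠ 0 := by positivity
      field_simp
      push_cast
      ring
  -- main chain
  calc ∑ j ∈ Finset.range (p + 2), x j * dde t (l ++ [x j])
      = ∑ j ∈ Finset.range (p + 2), ∑' m, x j *
          (t ^ (p + 2 + m) / ((p + 2 + m).factorial : ℝ) * hsymm (l ++ [x j]) m) := by
        refine Finset.sum_congr rfl fun j hj => ?_
        rw [hddelj j hj, ← tsum_mul_left]
    _ = ∑' m, ∑ j ∈ Finset.range (p + 2), x j *
          (t ^ (p + 2 + m) / ((p + 2 + m).factorial : ℝ) * hsymm (l ++ [x j]) m) :=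
        (Summable.tsum_finsetSum sCj).symm
    _ = ∑' m, F (m + 1) := tsum_congr hkey
    _ = ∑' n, F n := by
        rw [Summable.tsum_eq_zero_add sF]
        simp [hF]
    _ = ∑' n, (G n + (Epre n - D n)) := tsum_congr hFG
    _ = (∑' n, G n) + ((∑' n, Epre n) - ∑' n, D n) := by
        rw [Summable.tsum_add sG (sEpre.sub sD), Summable.tsum_sub sEpre sD]
    _ = ∑' n, G n := by rw [hEpre0]; ring
    _ = (x 0 * t - ((p : ℝ) + 1)) * dde t l + t * dde t l' := by
        rw [hG, Summable.tsum_add (sA.mul_left _) (sB.mul_left _), tsum_mul_left, tsum_mul_left,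
          hddel, hddel']

lemma hsymm_single (y : ℝ) (k : ℕ) : hsymm [y] k = y ^ k := by
  simp [hsymm]

lemma hsymm_pair (y : ℝ) (m : ℕ) : hsymm [y, y] m = ((m : ℝ) + 1) * y ^ m := by
  rw [hsymm_cons]
  have : ∀ pr ∈ Finset.HasAntidiagonal.antidiagonal m, y ^ pr.1 * hsymm [y] pr.2 = y ^ m := by
    intro pr hpr
    rw [Finset.HasAntidiagonal.mem_antidiagonal] at hpr
    rw [hsymm_single, ← pow_add, hpr]
  rw [Finset.sum_congr rfl this, Finset.sum_const, Finset.Nat.card_antidiagonal]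
  rw [nsmul_eq_mul]
  push_cast
  ring

lemma q0_case (x0 t : ℝ) : x0 * dde t [x0, x0] = t * x0 * Real.exp (t * x0) := by
  have hlen : ([x0, x0] : List ℝ).length = 2 := rfl
  rw [dde, if_neg (by simp), hlen]
  norm_num
  rw [Real.exp_eq_exp_ℝ, NormedSpace.exp_eq_tsum_div]
  rw [← tsum_mul_left, ← tsum_mul_left]
  refine tsum_congr fun m => ?_
  rw [hsymm_pair]
  have hfact : ((1 + m).factorial : ℝ) = (m + 1) * (m.factorial : ℝ) := by
    rw [Nat.add_comm 1 m, Nat.factorial_succ]; push_cast; ring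
  have hm : (0:ℝ) < (m.factorial : ℝ) := by exact_mod_cast m.factorial_pos
  rw [hfact]
  have : t ^ (1 + m) = t * t ^ m := by rw [pow_add, pow_one]
  rw [this]
  field_simp
  ring


/-- **Closed form for the weighted, repeated-argument sum**: for every tuple `(x_0, …, x_q)`
and real `τ`, `Σ_{j=0}^{q} x_j e^{-τ[x_0,…,x_q,x_j]}` equals
`(−x_0 τ − q) e^{-τ[x_0,…,x_q]} − τ e^{-τ[x_1,…,x_q]}` when `q ≥ 1`, and
`−τ x_0 e^{-τ x_0}` when `q = 0`. -/
theorem weighted_repeatedarg_sum_closed_form (q : ℕ) (x : ℕ → ℝ) (τ : ℝ) :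
    (1 ≤ q →
      ∑ j ∈ Finset.range (q + 1), x j * dde (-τ) (seg x 0 q ++ [x j])
        = (-(x 0) * τ - q) * dde (-τ) (seg x 0 q) - τ * dde (-τ) (seg x 1 q))
    ∧ (q = 0 →
      x 0 * dde (-τ) [x 0, x 0] = -τ * x 0 * Real.exp (-τ * x 0)) := by
  constructor
  · intro hq
    obtain ⟨p, rfl⟩ : ∃ p, q = p + 1 := ⟨q - 1, by omega⟩
    rw [show p + 1 + 1 = p + 2 from rfl, main_aux p x (-τ)]
    push_cast
    ring
  · intro _
    exact q0_case (x 0) (-τ)
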